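/- Let X be a metric space, S a family of subsets, ζ : S → [0,∞] a size function, μ a Borel regular (outer) measure on X, A ⊆ X, and t > 0. Suppose the covering relation C_{μ,ζ} (pairs (x,S) with x ∈ S ∈ S_{μ,ζ}) is fine at every point of A, and the Federer density satisfies F^ζ(μ,x) < t for all x ∈ A. Then μ(E) ≤ t · ψ_ζ(E) for every E ⊆ A. -/

import Mathlib

open Set Metric MeasureTheory ENNReal Filter Topology

variable {X : Type*}

section Defs
variable [MetricSpace X] [MeasurableSpace X]

/-- The `δ`-approximating pre-measure `ζ_δ` of the Carathéodory construction built from a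
family of sets `S` and a size function `ζ`: the infimum of `∑_j ζ(E_j)` over countable
covers of `R` by members `E_j ∈ S` of diameter at most `δ`. -/
noncomputable def caraPre (S : Set (Set X)) (ζ : Set X → ℝ≥0∞) (δ : ℝ≥0∞) (R : Set X) : ℝ≥0∞ :=
  ⨅ (E : ℕ → Set X) (_ : ∀ n, E n ∈ S ∧ EMetric.diam (E n) ≤ δ) (_ : R ⊆ ⋃ n, E n),
    ∑' n, ζ (E n)

/-- The Carathéodory approximating measure `ψ_ζ = sup_{δ>0} ζ_δ`. -/
noncomputable def psi (S : Set (Set X)) (ζ : Set X → ℝ≥0∞) (R : Set X) : ℝ≥0∞ :=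
  ⨆ (δ : ℝ≥0∞) (_ : 0 < δ), caraPre S ζ δ R

/-- The quotient function `Q_{μ,ζ}`. -/
noncomputable def fedQuot (μ : Measure X) (ζ : Set X → ℝ≥0∞) (T : Set X) : ℝ≥0∞ :=
  if ζ T = 0 then ∞ else if ζ T = ∞ then 0 else μ T / ζ T

/-- The family `S_{μ,ζ}`: members of `S` except those on which `ζ` and `μ` both vanish or
are both infinite. -/
def adm (μ : Measure X) (S : Set (Set X)) (ζ : Set X → ℝ≥0∞) : Set (Set X) :=
  {T ∈ S | ¬ (ζ T = 0 ∧ μ T = 0) ∧ ¬ (ζ T = ∞ ∧ μ T = ∞)}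

/-- A family of sets `𝒮` covers finely at `x` (equivalently, the associated covering
relation is fine at `x`). -/
def Fine (𝒮 : Set (Set X)) (x : X) : Prop :=
  ∀ ε : ℝ≥0∞, 0 < ε → ∃ T ∈ 𝒮, x ∈ T ∧ EMetric.diam T < ε

/-- The Federer density `F^ζ(μ,x)`: the covering limsup of `Q_{μ,ζ}` over members of
`S_{μ,ζ}` containing `x` with diameter tending to `0`. -/
noncomputable def fedDensity (μ : Measure X) (S : Set (Set X)) (ζ : Set X → ℝ≥0∞) (x : X) :
    ℝ≥0∞ :=
  ⨅ (ε : ℝ≥0∞) (_ : 0 < ε),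
    ⨆ (T : Set X) (_ : T ∈ adm μ S ζ ∧ x ∈ T ∧ EMetric.diam T < ε), fedQuot μ ζ T

/-- The size function `ζ_α(T) = c_α diam(T)^α`. -/
noncomputable def sizeDiam (c : ℝ≥0∞) (α : ℝ) (T : Set X) : ℝ≥0∞ :=
  c * EMetric.diam T ^ α

/-- The enlargement `Ŝ = ⋃ {T ∈ S : T ∩ S ≠ ∅, diam T ≤ 2 diam S}`. -/
def hatSet (S : Set (Set X)) (T : Set X) : Set X :=
  ⋃₀ {U | U ∈ S ∧ (U ∩ T).Nonempty ∧ EMetric.diam U ≤ 2 * EMetric.diam T}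

/-- The doubling-type condition on the size function `ζ`: there are constants `c, η > 0`
such that every `S ∈ 𝒮` admits `S̃ ∈ 𝒮` with `Ŝ ⊆ S̃`, `diam S̃ ≤ c diam S` and
`ζ(S̃) ≤ η ζ(S)`. -/
def DoublingSize (S : Set (Set X)) (ζ : Set X → ℝ≥0∞) : Prop :=
  ∃ c η : ℝ≥0∞, 0 < c ∧ c < ∞ ∧ 0 < η ∧ η < ∞ ∧
    ∀ T ∈ S, ∃ T' ∈ S, hatSet S T ⊆ T' ∧
      EMetric.diam T' ≤ c * EMetric.diam T ∧ ζ T' ≤ η * ζ T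

end Defs

/-- The family of all closed balls (with positive radius) of a metric space. -/
def closedBallsF (X : Type*) [MetricSpace X] : Set (Set X) :=
  {T | ∃ (x : X) (r : ℝ), 0 < r ∧ T = Metric.closedBall x r}

/-- The family of all closed subsets of a metric space. -/
def closedSetsF (X : Type*) [MetricSpace X] : Set (Set X) := {T | IsClosed T}

section DefsM
variable [MetricSpace X] [MeasurableSpace X]

/-- A (outer) measure `μ` is Borel regular if every set is contained in a Borel set of the
same measure. -/
def BorelRegular (μ : Measure X) : Prop :=
  ∀ A : Set X, ∃ B : Set X, MeasurableSet B ∧ A ⊆ B ∧ μ A = μ B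

/-- There exists a countable open cover of `X` whose elements have finite `μ`-measure. -/
def SigmaFiniteOpen (μ : Measure X) : Prop :=
  ∃ U : ℕ → Set X, (∀ n, IsOpen (U n)) ∧ (⋃ n, U n) = univ ∧ ∀ n, μ (U n) < ∞

/- The Carathéodory-construction measure `ψ_ζ` as a Borel measure, via the metric
construction (sets outside the family `S` are given infinite size). -/
open Classical in
noncomputable def psiM [MeasurableSpace X] [BorelSpace X] (S : Set (Set X))
    (ζ : Set X → ℝ≥0∞) : Measure X :=
  Measure.mkMetric' (fun T => if T ∈ S then ζ T else ∞)

/-- The upper (centered) spherical density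
`Θ^{*α}(μ,x) = limsup_{r→0⁺} μ(B̄(x,r))/(c_α (2r)^α)`. -/
noncomputable def upperSphDensity (μ : Measure X) (c : ℝ≥0∞) (α : ℝ) (x : X) : ℝ≥0∞ :=
  Filter.limsup
    (fun r : ℝ => μ (Metric.closedBall x r) / (c * ENNReal.ofReal (2 * r) ^ α)) (𝓝[>] 0)

/-- `X` is diametrically regular: for all `x ∈ X`, `R > 0` there is `δ > 0` such that
`t ↦ diam B(y,t)` is continuous on `(0,δ)` for every `y ∈ B̄(x,R)`. -/
def DiamRegular (X : Type*) [MetricSpace X] : Prop :=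
  ∀ x : X, ∀ R > (0:ℝ), ∃ δ > (0:ℝ), ∀ y ∈ Metric.closedBall x R,
    ContinuousOn (fun t : ℝ => Metric.diam (Metric.ball y t)) (Ioo 0 δ)

end DefsM


/-- Monotonicity of `caraPre` in the set argument. -/
theorem caraPre_mono [MetricSpace X] [MeasurableSpace X] (S : Set (Set X)) (ζ : Set X → ℝ≥0∞)
    (δ : ℝ≥0∞) {B E : Set X} (h : B ⊆ E) : caraPre S ζ δ B ≤ caraPre S ζ δ E := by
  refine le_iInf fun F => le_iInf fun hF => le_iInf fun hcov => ?_
  exact iInf₂_le_of_le F hF (iInf_le_of_le (h.trans hcov) le_rfl)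

theorem stmt4_aux [MetricSpace X] [MeasurableSpace X] [BorelSpace X]
    (μ : Measure X) (S : Set (Set X)) (ζ : Set X → ℝ≥0∞)
    (A : Set X) (t : ℝ≥0∞) (ht : 0 < t) (ht' : t ≠ ∞)
    (hdens : ∀ x ∈ A, fedDensity μ S ζ x < t) :
    ∀ E ⊆ A, μ E ≤ t * psi S ζ E := by
  intro E hE
  set A' : ℕ → Set X := fun n =>
    {x ∈ E | ∀ T, T ∈ adm μ S ζ → x ∈ T → EMetric.diam T < (↑(n+1) : ℝ≥0∞)⁻¹ →
      fedQuot μ ζ T < t} with hA'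
  have hmono : Monotone A' := by
    intro n m hnm x hx
    refine ⟨hx.1, fun T hT hxT hd => hx.2 T hT hxT (hd.trans_le ?_)⟩
    exact ENNReal.inv_le_inv.mpr (by exact_mod_cast Nat.succ_le_succ hnm)
  have hcov : E = ⋃ n, A' n := by
    refine Subset.antisymm (fun x hx => ?_) (iUnion_subset fun n x hx => hx.1)
    have hd := hdens x (hE hx)
    rw [fedDensity, iInf_lt_iff] at hd
    obtain ⟨ε, hd⟩ := hd
    rw [iInf_lt_iff] at hd
    obtain ⟨hε, hsup⟩ := hd
    obtain ⟨n, hn⟩ := ENNReal.exists_inv_nat_lt hε.ne'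
    refine mem_iUnion.mpr ⟨n, hx, fun T hT hxT hdT => ?_⟩
    have hlt : EMetric.diam T < ε := by
      refine hdT.trans_le (le_trans (ENNReal.inv_le_inv.mpr ?_) hn.le)
      exact_mod_cast Nat.le_succ n
    exact lt_of_le_of_lt (le_iSup₂ (f := fun (T : Set X)
      (_ : T ∈ adm μ S ζ ∧ x ∈ T ∧ EMetric.diam T < ε) => fedQuot μ ζ T) T
      ⟨hT, hxT, hlt⟩) hsup
  -- per-cover estimate
  have key : ∀ n, μ (A' n) ≤ t * psi S ζ E := by
    intro n
    have h1 : μ (A' n) ≤ t * caraPre S ζ (↑(n+2) : ℝ≥0∞)⁻¹ (A' n) := by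
      rw [caraPre, ENNReal.mul_iInf_of_ne ht.ne' ht']
      refine le_iInf fun F => ?_
      rw [ENNReal.mul_iInf_of_ne ht.ne' ht']
      refine le_iInf fun hF => ?_
      rw [ENNReal.mul_iInf_of_ne ht.ne' ht']
      refine le_iInf fun hFcov => ?_
      rw [← ENNReal.tsum_mul_left]
      have hsub : A' n ⊆ ⋃ j, F j ∩ A' n := fun x hx => by
        obtain ⟨j, hj⟩ := mem_iUnion.mp (hFcov hx)
        exact mem_iUnion.mpr ⟨j, hj, hx⟩
      refine (measure_mono hsub).trans ((measure_iUnion_le _).trans (ENNReal.tsum_le_tsum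
        fun j => ?_))
      rcases eq_empty_or_nonempty (F j ∩ A' n) with hemp | ⟨x, hxF, hxA⟩
      · simp [hemp]
      have hdiam : EMetric.diam (F j) < (↑(n+1) : ℝ≥0∞)⁻¹ := by
        refine lt_of_le_of_lt (hF j).2 (ENNReal.inv_lt_inv.mpr ?_)
        exact_mod_cast Nat.lt_succ_self (n+1)
      by_cases hadm : F j ∈ adm μ S ζ
      · have hq := hxA.2 (F j) hadm hxF hdiam
        rw [fedQuot] at hq
        split_ifs at hq with h0 hinf
        · exact absurd hq (not_lt.mpr le_top)
        · simp [hinf, ENNReal.mul_top ht.ne']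
        · have : μ (F j) ≤ t * ζ (F j) := by
            rw [ENNReal.div_lt_iff (Or.inl h0) (Or.inl hinf)] at hq
            exact (mul_comm (ζ (F j)) t ▸ hq.le)
          exact (measure_mono inter_subset_left).trans this
      · have hFS := (hF j).1
        have : (ζ (F j) = 0 ∧ μ (F j) = 0) ∨ (ζ (F j) = ∞ ∧ μ (F j) = ∞) := by
          by_contra hc
          push_neg at hc
          exact hadm ⟨hFS, by tauto, by tauto⟩
        rcases this with ⟨_, hμ0⟩ | ⟨hζ, _⟩
        · exact le_trans (measure_mono inter_subset_left) (by simp [hμ0])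
        · simp [hζ, ENNReal.mul_top ht.ne']
    refine h1.trans (mul_le_mul_right ?_ t)
    refine (caraPre_mono S ζ _ (hcov ▸ subset_iUnion A' n : A' n ⊆ E)).trans ?_
    exact le_iSup₂ (f := fun (δ : ℝ≥0∞) (_ : 0 < δ) => caraPre S ζ δ E) _
      (ENNReal.inv_pos.mpr (by simp))
  calc μ E = ⨆ n, μ (A' n) := by rw [hcov]; exact hmono.directed_le.measure_iUnion
    _ ≤ t * psi S ζ E := iSup_le key

/-- Federer 2.10.17(2), revised. If `μ` is a (Borel) regular measure,
`S_{μ,ζ}` covers `A` finely and the Federer density satisfies `F^ζ(μ,x) < t` for every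
`x ∈ A`, then `μ(E) ≤ t ψ_ζ(E)` for every `E ⊆ A`. -/
theorem stmt4 [MetricSpace X] [MeasurableSpace X] [BorelSpace X]
    (μ : Measure X) (hreg : BorelRegular μ) (S : Set (Set X)) (ζ : Set X → ℝ≥0∞)
    (A : Set X) (t : ℝ≥0∞) (ht : 0 < t)
    (hfine : ∀ x ∈ A, Fine (adm μ S ζ) x)
    (hdens : ∀ x ∈ A, fedDensity μ S ζ x < t) :
    ∀ E ⊆ A, μ E ≤ t * psi S ζ E := by
  rcases eq_or_ne t ∞ with rfl | ht'
  · intro E hE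
    set B : ℕ → Set X := fun k => {x ∈ E | fedDensity μ S ζ x < (↑(k+1) : ℝ≥0∞)} with hB
    have hmono : Monotone B := fun n m hnm x hx =>
      ⟨hx.1, hx.2.trans_le (by exact_mod_cast Nat.succ_le_succ hnm)⟩
    have hcov : E = ⋃ k, B k := by
      refine Subset.antisymm (fun x hx => ?_) (iUnion_subset fun k x hx => hx.1)
      obtain ⟨k, hk⟩ := ENNReal.exists_nat_gt (hdens x (hE hx)).ne_top
      exact mem_iUnion.mpr ⟨k, hx, hk.trans_le (by exact_mod_cast Nat.le_succ k)⟩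
    have hk : ∀ k, μ (B k) ≤ (↑(k+1) : ℝ≥0∞) * psi S ζ (B k) :=
      fun k => stmt4_aux μ S ζ (B k) _ (by positivity) (by simp)
        (fun x hx => hx.2) (B k) le_rfl
    rcases eq_or_ne (psi S ζ E) 0 with hψ | hψ
    · have hz : ∀ k, μ (B k) = 0 := by
        intro k
        have hle : psi S ζ (B k) ≤ psi S ζ E := by
          refine iSup_mono fun δ => iSup_mono fun _ => caraPre_mono S ζ δ ?_
          exact fun x hx => hx.1
        refine le_antisymm ?_ (zero_le)
        calc μ (B k) ≤ (↑(k+1) : ℝ≥0∞) * psi S ζ (B k) := hk k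
          _ ≤ (↑(k+1) : ℝ≥0∞) * psi S ζ E := mul_le_mul_right hle _
          _ = 0 := by rw [hψ, mul_zero]
      calc μ E = ⨆ k, μ (B k) := by rw [hcov]; exact hmono.directed_le.measure_iUnion
        _ = 0 := by simp [hz]
        _ ≤ _ := zero_le
    · rw [ENNReal.top_mul hψ]; exact le_top
  · exact stmt4_aux μ S ζ A t ht ht' hdens
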